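/- Let n ≥ 2 be an integer and t a positive integer dividing 2n such that 2n/t is odd (so t is even), and let x, y be the standard generators of the generalized quaternion group Q_{4n}. Then the subgroup ⟨x^t⟩ is a perfect code in the Cayley graph Cay(Q_{4n}, S), where S = {x^n} ∪ {x^i, x^{-i} : 1 ≤ i ≤ t/2 − 1} ∪ {x^i y, x^{n+i} y : 0 ≤ i ≤ t/2 − 1}. -/

import Mathlib

/-- The Cayley graph of a group `G` with connection set `S`: distinct vertices `x`, `y`
are adjacent iff `y * x⁻¹ ∈ S` (for inverse-closed `S` this relation is symmetric). -/
def cayley (G : Type*) [Group G] (S : Set G) : SimpleGraph G :=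
  SimpleGraph.fromRel (fun x y => y * x⁻¹ ∈ S)

/-- `C` is a perfect code in the graph `Γ`: `C` is an independent set and every vertex
outside `C` is adjacent to exactly one vertex of `C`. -/
def IsPerfectCode {V : Type*} (Γ : SimpleGraph V) (C : Set V) : Prop :=
  (∀ u ∈ C, ∀ v ∈ C, ¬ Γ.Adj u v) ∧ ∀ v ∉ C, ∃! u, u ∈ C ∧ Γ.Adj v u

/-- `C` is a perfect code of the group `G`: there is an inverse-closed `S ⊆ G` with
`1 ∉ S` such that `C` is a perfect code in `Cay(G, S)`. -/
def IsPerfectCodeOfGroup (G : Type*) [Group G] (C : Set G) : Prop :=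
  ∃ S : Set G, S⁻¹ = S ∧ (1 : G) ∉ S ∧ IsPerfectCode (cayley G S) C

/-- Perfect code from unique factorization `g = s * c` with `s ∈ S ∪ {1}`, `c ∈ C`. -/
lemma qpc_code_of_unique_factor {G : Type*} [Group G] (S C : Set G)
    (hSinv : ∀ s ∈ S, s⁻¹ ∈ S) (h1 : (1:G) ∉ S)
    (hfac : ∀ g : G, ∃! p : G × G, (p.1 ∈ S ∨ p.1 = 1) ∧ p.2 ∈ C ∧ g = p.1 * p.2) :
    IsPerfectCode (cayley G S) C := by
  constructor
  · intro u hu v hv hadj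
    rw [cayley, SimpleGraph.fromRel_adj] at hadj
    obtain ⟨hne, h⟩ := hadj
    have hs : v * u⁻¹ ∈ S := by
      rcases h with h | h
      · exact h
      · simpa using hSinv _ h
    obtain ⟨p, _, hun⟩ := hfac v
    have h1' : ((1:G), v) = p := hun _ ⟨Or.inr rfl, hv, (one_mul v).symm⟩
    have h2' : (v * u⁻¹, u) = p := hun _ ⟨Or.inl hs, hu, by group⟩
    rw [← h1'] at h2'
    have : v * u⁻¹ = (1:G) := (Prod.ext_iff.mp h2').1
    rw [this] at hs
    exact h1 hs
  · intro v hv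
    obtain ⟨⟨s, c⟩, ⟨hs, hc, hveq⟩, hun⟩ := hfac v
    have hs' : s ∈ S := by
      rcases hs with h | rfl
      · exact h
      · rw [one_mul] at hveq; rw [hveq] at hv; exact absurd hc hv
    have hvc : v ≠ c := by
      rintro rfl
      have : s = 1 := by
        exact (right_eq_mul.mp hveq)
      rw [this] at hs'; exact h1 hs'
    refine ⟨c, ⟨hc, ?_⟩, ?_⟩
    · rw [cayley, SimpleGraph.fromRel_adj]
      refine ⟨hvc, Or.inr ?_⟩
      rw [hveq]; simpa using hs'
    · rintro u ⟨hu, hadj⟩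
      rw [cayley, SimpleGraph.fromRel_adj] at hadj
      obtain ⟨hne, h⟩ := hadj
      have hvu : v * u⁻¹ ∈ S := by
        rcases h with h | h
        · simpa using hSinv _ h
        · exact h
      have := hun (v * u⁻¹, u) ⟨Or.inl hvu, hu, by group⟩
      exact (Prod.ext_iff.mp this).2

lemma qpc_a_inv {n : ℕ} (c : ZMod (2*n)) :
    (QuaternionGroup.a c)⁻¹ = QuaternionGroup.a (-c) := rfl

lemma qpc_xa_inv {n : ℕ} (c : ZMod (2*n)) :
    (QuaternionGroup.xa c)⁻¹ = QuaternionGroup.xa ((n : ZMod (2*n)) + c) := rfl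

lemma qpc_a_pow {n : ℕ} (c : ZMod (2*n)) (k : ℕ) :
    (QuaternionGroup.a c)^k = QuaternionGroup.a ((k : ZMod (2*n)) * c) := by
  induction k with
  | zero => simp
  | succ k ih =>
      rw [pow_succ, ih, QuaternionGroup.a_mul_a]
      congr 1
      push_cast
      ring

lemma qpc_a_zpow {n : ℕ} (c : ZMod (2*n)) (k : ℤ) :
    (QuaternionGroup.a c)^k = QuaternionGroup.a ((k : ZMod (2*n)) * c) := by
  cases k with
  | ofNat k =>
      rw [Int.ofNat_eq_natCast, zpow_natCast, qpc_a_pow]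
      congr 2
      push_cast
      ring
  | negSucc k =>
      rw [zpow_negSucc, qpc_a_pow, qpc_a_inv]
      congr 1
      push_cast
      ring

lemma qpc_mem_zpowers_a_iff (n t : ℕ) [NeZero (2*n)] (htdvd : t ∣ 2*n) (m : ZMod (2*n)) :
    QuaternionGroup.a m ∈ Subgroup.zpowers (QuaternionGroup.a (t : ZMod (2*n))) ↔
      ZMod.castHom htdvd (ZMod t) m = 0 := by
  rw [Subgroup.mem_zpowers_iff]
  constructor
  · rintro ⟨k, hk⟩
    rw [qpc_a_zpow] at hk
    have hk' : ((k : ZMod (2*n)) * (t : ZMod (2*n))) = m := by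
      injection hk
    rw [← hk', map_mul, map_natCast, ZMod.natCast_self, mul_zero]
  · intro h
    have hdvdval : t ∣ m.val := by
      rwa [ZMod.castHom_apply, ← ZMod.natCast_val, ZMod.natCast_eq_zero_iff] at h
    refine ⟨((m.val / t : ℕ) : ℤ), ?_⟩
    rw [qpc_a_zpow]
    congr 1
    rw [Int.cast_natCast, ← Nat.cast_mul, Nat.div_mul_cancel hdvdval, ZMod.natCast_zmod_val]

lemma qpc_xa_not_mem (n : ℕ) (c m : ZMod (2*n)) :
    QuaternionGroup.xa m ∉ Subgroup.zpowers (QuaternionGroup.a c) := by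
  rw [Subgroup.mem_zpowers_iff]
  rintro ⟨k, hk⟩
  rw [qpc_a_zpow] at hk
  exact (by cases hk)

abbrev PA (n t : ℕ) (d : ZMod (2 * n)) : Prop :=
  d = (n : ZMod (2 * n)) ∨
    ∃ i : ℕ, 1 ≤ i ∧ i ≤ t / 2 - 1 ∧ (d = (i : ZMod (2 * n)) ∨ d = -(i : ZMod (2 * n)))

abbrev PX (n t : ℕ) (e : ZMod (2 * n)) : Prop :=
  ∃ i : ℕ, i ≤ t / 2 - 1 ∧ (e = -(i : ZMod (2 * n)) ∨ e = -((n + i : ℕ) : ZMod (2 * n)))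

/-- canonical representative in the `a`-part with given residue `j` mod `t` -/
noncomputable def repA (n t j : ℕ) : ZMod (2*n) :=
  if j = 0 then 0 else if j < t/2 then (j : ZMod (2*n)) else
    if j = t/2 then (n : ZMod (2*n)) else -((t - j : ℕ) : ZMod (2*n))

/-- canonical representative in the `xa`-part with given residue `j` mod `t` -/
noncomputable def repX (n t j : ℕ) : ZMod (2*n) :=
  if j = 0 then 0 else if j ≤ t/2 then -((n + (t/2 - j) : ℕ) : ZMod (2*n)) else
    -((t - j : ℕ) : ZMod (2*n))

section Key

variable (n t : ℕ)

lemma qpc_repA_exists_unique (hn : 2 ≤ n) (ht : 0 < t) (htdvd : t ∣ 2 * n)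
    (hodd : Odd (2 * n / t)) (m : ZMod (2 * n)) :
    ∃! d : ZMod (2 * n), (d = 0 ∨ PA n t d) ∧
      ZMod.castHom htdvd (ZMod t) d = ZMod.castHom htdvd (ZMod t) m := by
  haveI : NeZero t := ⟨ht.ne'⟩
  haveI : NeZero (2*n) := ⟨by omega⟩
  set T := t / 2 with hTdef
  obtain ⟨r0, hr0⟩ := hodd
  have hq : 2 * n = t * (2 * r0 + 1) := by
    rw [← Nat.mul_div_cancel' htdvd, hr0]
  have hteven : t % 2 = 0 := by
    have h1 : Even (t * (2 * r0 + 1)) := by rw [← hq]; exact even_two_mul n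
    rcases Nat.even_mul.mp h1 with h | h
    · exact Nat.even_iff.mp h
    · exfalso; rw [Nat.even_iff] at h; omega
  have h2T : t = 2 * T := by omega
  have hT1 : 1 ≤ T := by omega
  have hneq : n = t * r0 + T := by
    have : 2 * n = 2 * (t * r0 + T) := by rw [hq, h2T]; ring
    omega
  have hnT : t ∣ n + T := ⟨r0 + 1, by rw [Nat.mul_add, mul_one, hneq]; omega⟩
  set φ := ZMod.castHom htdvd (ZMod t) with hφdef
  have key_n : φ ((n : ℕ) : ZMod (2*n)) = ((T:ℕ) : ZMod t) := by
    rw [map_natCast, hneq]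
    push_cast [ZMod.natCast_self]
    ring
  have key_nat : ∀ i : ℕ, φ ((i : ℕ) : ZMod (2*n)) = ((i : ℕ) : ZMod t) := fun i => map_natCast φ i
  have key_neg : ∀ i : ℕ, i ≤ t → φ (-((i : ℕ) : ZMod (2*n))) = ((t - i : ℕ) : ZMod t) := by
    intro i hi
    rw [map_neg, map_natCast]
    symm
    apply eq_neg_of_add_eq_zero_left
    rw [← Nat.cast_add, show t - i + i = t by omega]
    exact ZMod.natCast_self t
  have cinj : ∀ j j' : ℕ, j < t → j' < t → ((j : ZMod t) = (j' : ZMod t)) → j = j' := by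
    intro j j' hj hj' h
    rw [← ZMod.val_cast_of_lt hj, ← ZMod.val_cast_of_lt hj', h]
  -- every valid d equals repA of its residue
  have hval : ∀ d : ZMod (2*n), (d = 0 ∨ PA n t d) →
      ∃ j : ℕ, j < t ∧ φ d = ((j:ℕ) : ZMod t) ∧ d = repA n t j := by
    rintro d (rfl | rfl | ⟨i, hi1, hi2, rfl | rfl⟩)
    · exact ⟨0, ht, by simp, by simp [repA]⟩
    · refine ⟨T, by omega, key_n, ?_⟩
      rw [repA, if_neg (by omega), if_neg (by omega), if_pos rfl]
    · refine ⟨i, by omega, key_nat i, ?_⟩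
      rw [repA, if_neg (by omega), if_pos (by omega)]
    · refine ⟨t - i, by omega, key_neg i (by omega), ?_⟩
      rw [repA, if_neg (by omega), if_neg (by omega), if_neg (by omega)]
      congr 2
      omega
  set r := (φ m).val with hrdef
  have hrt : r < t := ZMod.val_lt _
  have hφm : φ m = ((r : ℕ) : ZMod t) := (ZMod.natCast_zmod_val (φ m)).symm
  have hex : (repA n t r = 0 ∨ PA n t (repA n t r)) ∧ φ (repA n t r) = φ m := by
    rcases Nat.lt_or_ge r T with hlt | hge
    · rcases Nat.eq_zero_or_pos r with h0 | h0
      · refine ⟨Or.inl (by rw [repA, if_pos h0]), ?_⟩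
        rw [repA, if_pos h0, map_zero, hφm, h0]
        simp
      · refine ⟨Or.inr (Or.inr ⟨r, h0, by omega, Or.inl (by rw [repA, if_neg (by omega), if_pos hlt])⟩), ?_⟩
        rw [repA, if_neg (by omega), if_pos hlt, key_nat, hφm]
    · rcases Nat.eq_or_lt_of_le hge with heq | hgt
      · refine ⟨Or.inr (Or.inl (by rw [repA, if_neg (by omega), if_neg (by omega), if_pos heq.symm])), ?_⟩
        rw [repA, if_neg (by omega), if_neg (by omega), if_pos heq.symm, key_n, hφm, ← heq]
      · have hrepA : repA n t r = -((t - r : ℕ) : ZMod (2*n)) := by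
          rw [repA, if_neg (by omega), if_neg (by omega), if_neg (by omega)]
        refine ⟨Or.inr (Or.inr ⟨t - r, by omega, by omega, Or.inr hrepA⟩), ?_⟩
        rw [hrepA, key_neg (t - r) (by omega), hφm]
        congr 1
        omega
  refine ⟨repA n t r, hex, ?_⟩
  intro d ⟨hd, hdm⟩
  obtain ⟨j, hj, hφd, hdrep⟩ := hval d hd
  obtain ⟨j', hj', hφd', hdrep'⟩ := hval (repA n t r) hex.1
  have hjj : j = j' := by
    apply cinj _ _ hj hj'
    rw [← hφd, ← hφd', hdm, hex.2]
  rw [hdrep, hdrep', hjj]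

lemma qpc_repX_exists_unique (hn : 2 ≤ n) (ht : 0 < t) (htdvd : t ∣ 2 * n)
    (hodd : Odd (2 * n / t)) (m : ZMod (2 * n)) :
    ∃! e : ZMod (2 * n), PX n t e ∧
      ZMod.castHom htdvd (ZMod t) e = ZMod.castHom htdvd (ZMod t) m := by
  haveI : NeZero t := ⟨ht.ne'⟩
  haveI : NeZero (2*n) := ⟨by omega⟩
  set T := t / 2 with hTdef
  obtain ⟨r0, hr0⟩ := hodd
  have hq : 2 * n = t * (2 * r0 + 1) := by
    rw [← Nat.mul_div_cancel' htdvd, hr0]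
  have hteven : t % 2 = 0 := by
    have h1 : Even (t * (2 * r0 + 1)) := by rw [← hq]; exact even_two_mul n
    rcases Nat.even_mul.mp h1 with h | h
    · exact Nat.even_iff.mp h
    · exfalso; rw [Nat.even_iff] at h; omega
  have h2T : t = 2 * T := by omega
  have hT1 : 1 ≤ T := by omega
  have hneq : n = t * r0 + T := by
    have : 2 * n = 2 * (t * r0 + T) := by rw [hq, h2T]; ring
    omega
  have hnT : t ∣ n + T := ⟨r0 + 1, by rw [Nat.mul_add, mul_one, hneq]; omega⟩
  set φ := ZMod.castHom htdvd (ZMod t) with hφdef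
  have key_neg : ∀ i : ℕ, i ≤ t → φ (-((i : ℕ) : ZMod (2*n))) = ((t - i : ℕ) : ZMod t) := by
    intro i hi
    rw [map_neg, map_natCast]
    symm
    apply eq_neg_of_add_eq_zero_left
    rw [← Nat.cast_add, show t - i + i = t by omega]
    exact ZMod.natCast_self t
  have key_negn : ∀ i : ℕ, i ≤ T → φ (-(((n + i : ℕ)) : ZMod (2*n))) = ((T - i : ℕ) : ZMod t) := by
    intro i hi
    rw [map_neg, map_natCast]
    symm
    apply eq_neg_of_add_eq_zero_left
    rw [← Nat.cast_add, show T - i + (n + i) = n + T by omega]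
    exact (ZMod.natCast_eq_zero_iff _ _).mpr hnT
  have cinj : ∀ j j' : ℕ, j < t → j' < t → ((j : ZMod t) = (j' : ZMod t)) → j = j' := by
    intro j j' hj hj' h
    rw [← ZMod.val_cast_of_lt hj, ← ZMod.val_cast_of_lt hj', h]
  have hval : ∀ e : ZMod (2*n), PX n t e →
      ∃ j : ℕ, j < t ∧ φ e = ((j:ℕ) : ZMod t) ∧ e = repX n t j := by
    rintro e ⟨i, hi, rfl | rfl⟩
    · rcases Nat.eq_zero_or_pos i with h0 | h0
      · refine ⟨0, ht, ?_, ?_⟩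
        · rw [h0]; simp
        · rw [h0, repX, if_pos rfl]; simp
      · refine ⟨t - i, by omega, key_neg i (by omega), ?_⟩
        rw [repX, if_neg (by omega), if_neg (by omega)]
        congr 2
        omega
    · refine ⟨T - i, by omega, key_negn i (by omega), ?_⟩
      rw [repX, if_neg (by omega), if_pos (by omega)]
      congr 2
      omega
  set r := (φ m).val with hrdef
  have hrt : r < t := ZMod.val_lt _
  have hφm : φ m = ((r : ℕ) : ZMod t) := (ZMod.natCast_zmod_val (φ m)).symm
  have hex : PX n t (repX n t r) ∧ φ (repX n t r) = φ m := by
    rcases Nat.eq_zero_or_pos r with h0 | h0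
    · constructor
      · exact ⟨0, by omega, Or.inl (by rw [repX, if_pos h0]; simp)⟩
      · rw [repX, if_pos h0, map_zero, hφm, h0]; simp
    · rcases le_or_gt r T with hle | hgt
      · have hrep : repX n t r = -((n + (T - r) : ℕ) : ZMod (2*n)) := by
          rw [repX, if_neg (by omega), if_pos hle]
        constructor
        · exact ⟨T - r, by omega, Or.inr hrep⟩
        · rw [hrep, key_negn (T - r) (by omega), hφm]
          congr 1
          omega
      · have hrep : repX n t r = -((t - r : ℕ) : ZMod (2*n)) := by
          rw [repX, if_neg (by omega), if_neg (by omega)]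
        constructor
        · exact ⟨t - r, by omega, Or.inl hrep⟩
        · rw [hrep, key_neg (t - r) (by omega), hφm]
          congr 1
          omega
  refine ⟨repX n t r, hex, ?_⟩
  intro e ⟨he, hem⟩
  obtain ⟨j, hj, hφe, herep⟩ := hval e he
  obtain ⟨j', hj', hφe', herep'⟩ := hval (repX n t r) hex.1
  have hjj : j = j' := by
    apply cinj _ _ hj hj'
    rw [← hφe, ← hφe', hem, hex.2]
  rw [herep, herep', hjj]

end Key

lemma qpc_main (n : ℕ) (hn : 2 ≤ n) (t : ℕ) (ht : 0 < t) (htdvd : t ∣ 2 * n)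
    (hodd : Odd (2 * n / t)) (S : Set (QuaternionGroup n))
    (hSdef : S = {QuaternionGroup.a (1 : ZMod (2 * n)) ^ n} ∪
      {g | ∃ i : ℕ, 1 ≤ i ∧ i ≤ t / 2 - 1 ∧
        (g = QuaternionGroup.a (1 : ZMod (2 * n)) ^ i ∨
          g = (QuaternionGroup.a (1 : ZMod (2 * n)) ^ i)⁻¹)} ∪
      {g | ∃ i : ℕ, i ≤ t / 2 - 1 ∧
        (g = QuaternionGroup.a (1 : ZMod (2 * n)) ^ i * QuaternionGroup.xa (0 : ZMod (2 * n)) ∨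
          g = QuaternionGroup.a (1 : ZMod (2 * n)) ^ (n + i) * QuaternionGroup.xa (0 : ZMod (2 * n)))}) :
    IsPerfectCode (cayley (QuaternionGroup n) S)
      ((Subgroup.zpowers (QuaternionGroup.a (1 : ZMod (2 * n)) ^ t)) : Set (QuaternionGroup n)) := by
  haveI : NeZero (2 * n) := ⟨by omega⟩
  haveI : NeZero t := ⟨ht.ne'⟩
  have htle : t ≤ 2 * n := Nat.le_of_dvd (by omega) htdvd
  set T := t / 2 with hTdef
  obtain ⟨r0, hr0⟩ := id hodd
  have hq : 2 * n = t * (2 * r0 + 1) := by rw [← Nat.mul_div_cancel' htdvd, hr0]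
  have hteven : t % 2 = 0 := by
    have h1 : Even (t * (2 * r0 + 1)) := by rw [← hq]; exact even_two_mul n
    rcases Nat.even_mul.mp h1 with h | h
    · exact Nat.even_iff.mp h
    · exfalso; rw [Nat.even_iff] at h; omega
  have h2T : t = 2 * T := by omega
  have hT1 : 1 ≤ T := by omega
  set φ := ZMod.castHom htdvd (ZMod t) with hφdef
  have cinjN : ∀ j j' : ℕ, j < 2 * n → j' < 2 * n →
      ((j : ZMod (2 * n)) = (j' : ZMod (2 * n))) → j = j' := by
    intro j j' hj hj' h
    rw [← ZMod.val_cast_of_lt hj, ← ZMod.val_cast_of_lt hj', h]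
  have hnegn : -((n : ℕ) : ZMod (2 * n)) = ((n : ℕ) : ZMod (2 * n)) := by
    symm
    apply eq_neg_of_add_eq_zero_left
    rw [← Nat.cast_add, show n + n = 2 * n by ring]
    exact ZMod.natCast_self _
  have hSa : ∀ d : ZMod (2 * n), QuaternionGroup.a d ∈ S ↔ PA n t d := by
    intro d
    rw [hSdef]
    simp only [Set.mem_union, Set.mem_singleton_iff, Set.mem_setOf_eq,
      QuaternionGroup.a_one_pow, qpc_a_inv, QuaternionGroup.a_mul_xa, zero_sub,
      QuaternionGroup.a.injEq]
    constructor
    · rintro ((h | h) | ⟨i, hi, h | h⟩)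
      · exact Or.inl h
      · exact Or.inr h
      · exact (by cases h)
      · exact (by cases h)
    · rintro (h | h)
      · exact Or.inl (Or.inl h)
      · exact Or.inl (Or.inr h)
  have hSxa : ∀ e : ZMod (2 * n), QuaternionGroup.xa e ∈ S ↔ PX n t e := by
    intro e
    rw [hSdef]
    simp only [Set.mem_union, Set.mem_singleton_iff, Set.mem_setOf_eq,
      QuaternionGroup.a_one_pow, qpc_a_inv, QuaternionGroup.a_mul_xa, zero_sub,
      QuaternionGroup.xa.injEq]
    constructor
    · rintro ((h | ⟨i, hi1, hi2, h | h⟩) | ⟨i, hi, h | h⟩)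
      · exact (by cases h)
      · exact (by cases h)
      · exact (by cases h)
      · exact ⟨i, hi, Or.inl h⟩
      · exact ⟨i, hi, Or.inr h⟩
    · rintro ⟨i, hi, h | h⟩
      · exact Or.inr ⟨i, hi, Or.inl h⟩
      · exact Or.inr ⟨i, hi, Or.inr h⟩
  have hCa : ∀ m' : ZMod (2 * n),
      QuaternionGroup.a m' ∈ ((Subgroup.zpowers (QuaternionGroup.a (1 : ZMod (2 * n)) ^ t)) :
        Set (QuaternionGroup n)) ↔ φ m' = 0 := by
    intro m'
    rw [SetLike.mem_coe, QuaternionGroup.a_one_pow]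
    exact qpc_mem_zpowers_a_iff n t htdvd m'
  have hCxa : ∀ m' : ZMod (2 * n),
      QuaternionGroup.xa m' ∉ ((Subgroup.zpowers (QuaternionGroup.a (1 : ZMod (2 * n)) ^ t)) :
        Set (QuaternionGroup n)) := by
    intro m' h
    rw [SetLike.mem_coe, QuaternionGroup.a_one_pow] at h
    exact qpc_xa_not_mem n _ m' h
  apply qpc_code_of_unique_factor
  · -- inverse closed
    rintro s hs
    rcases s with d | e
    · rw [hSa] at hs
      rw [qpc_a_inv, hSa]
      rcases hs with rfl | ⟨i, hi1, hi2, rfl | rfl⟩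
      · exact Or.inl hnegn
      · exact Or.inr ⟨i, hi1, hi2, Or.inr rfl⟩
      · rw [neg_neg]; exact Or.inr ⟨i, hi1, hi2, Or.inl rfl⟩
    · rw [hSxa] at hs
      rw [qpc_xa_inv, hSxa]
      rcases hs with ⟨i, hi, rfl | rfl⟩
      · refine ⟨i, hi, Or.inr ?_⟩
        have hni : ((n + i : ℕ) : ZMod (2 * n)) = ↑n + ↑i := by push_cast; ring
        rw [hni, neg_add, hnegn]
      · refine ⟨i, hi, Or.inl ?_⟩
        have hni : ((n + i : ℕ) : ZMod (2 * n)) = ↑n + ↑i := by push_cast; ring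
        rw [hni]
        ring
  · -- 1 ∉ S
    intro h
    rw [QuaternionGroup.one_def, hSa] at h
    rcases h with h | ⟨i, hi1, hi2, h | h⟩
    · have := cinjN 0 n (by omega) (by omega) (by simpa using h)
      omega
    · have := cinjN 0 i (by omega) (by omega) (by simpa using h)
      omega
    · rw [eq_comm, neg_eq_zero] at h
      have := cinjN i 0 (by omega) (by omega) (by simpa using h)
      omega
  · -- unique factorization
    rintro (m | m)
    · obtain ⟨d, ⟨hdcond, hdφ⟩, hduniq⟩ := qpc_repA_exists_unique n t hn ht htdvd hodd m
      refine ⟨(QuaternionGroup.a d, QuaternionGroup.a (m - d)), ⟨?_, ?_, ?_⟩, ?_⟩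
      · rcases hdcond with rfl | h
        · exact Or.inr QuaternionGroup.one_def.symm
        · exact Or.inl ((hSa d).mpr h)
      · exact (hCa (m - d)).mpr (by rw [map_sub, hdφ, sub_self])
      · rw [QuaternionGroup.a_mul_a]
        congr 1
        ring
      · rintro ⟨s, c⟩ ⟨hs, hc, hg⟩
        rcases s with j | j
        · rcases c with c | c
          · rw [QuaternionGroup.a_mul_a] at hg
            have hmc : m = j + c := by simpa using hg
            have hcC : φ c = 0 := (hCa c).mp hc
            have hjcond : j = 0 ∨ PA n t j := by
              rcases hs with hs | hs
              · exact Or.inr ((hSa j).mp hs)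
              · rw [QuaternionGroup.one_def] at hs
                exact Or.inl (by simpa [-QuaternionGroup.a_zero] using hs)
            have hjφ : φ j = φ m := by rw [hmc, map_add, hcC, add_zero]
            have hjd : j = d := hduniq j ⟨hjcond, hjφ⟩
            have hcd : c = m - d := by rw [hmc, hjd]; ring
            rw [hjd, hcd]
          · exact absurd hc (hCxa c)
        · rcases c with c | c
          · rw [QuaternionGroup.xa_mul_a] at hg
            exact (by cases hg)
          · exact absurd hc (hCxa c)
    · obtain ⟨e, ⟨hePX, heφ⟩, heuniq⟩ := qpc_repX_exists_unique n t hn ht htdvd hodd m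
      refine ⟨(QuaternionGroup.xa e, QuaternionGroup.a (m - e)),
        ⟨Or.inl ((hSxa e).mpr hePX), ?_, ?_⟩, ?_⟩
      · exact (hCa (m - e)).mpr (by rw [map_sub, heφ, sub_self])
      · rw [QuaternionGroup.xa_mul_a]
        congr 1
        ring
      · rintro ⟨s, c⟩ ⟨hs, hc, hg⟩
        rcases s with j | j
        · rcases c with c | c
          · rw [QuaternionGroup.a_mul_a] at hg
            exact (by cases hg)
          · exact absurd hc (hCxa c)
        · rcases c with c | c
          · rw [QuaternionGroup.xa_mul_a] at hg
            have hmc : m = j + c := by simpa using hg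
            have hcC : φ c = 0 := (hCa c).mp hc
            have hjS : QuaternionGroup.xa j ∈ S := by
              rcases hs with hs | hs
              · exact hs
              · rw [QuaternionGroup.one_def] at hs
                exact (by cases hs)
            have hjφ : φ j = φ m := by rw [hmc, map_add, hcC, add_zero]
            have hje : j = e := heuniq j ⟨(hSxa j).mp hjS, hjφ⟩
            have hcd : c = m - e := by rw [hmc, hje]; ring
            rw [hje, hcd]
          · exact absurd hc (hCxa c)

/-- In `Q_{4n}` (`n ≥ 2`), if `t ∣ 2n` and `2n/t` is odd, then `⟨x^t⟩` is a perfect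
code in `Cay(Q_{4n}, S)` where
`S = {x^n} ∪ {x^i, x^{-i} : 1 ≤ i ≤ t/2 - 1} ∪ {x^i y, x^{n+i} y : 0 ≤ i ≤ t/2 - 1}`. -/
theorem quaternion_cyclic_subgroup_perfect_code_explicit (n : ℕ) (hn : 2 ≤ n)
    (t : ℕ) (ht : 0 < t) (htdvd : t ∣ 2 * n) (hodd : Odd (2 * n / t)) :
    letI x : QuaternionGroup n := QuaternionGroup.a (1 : ZMod (2 * n))
    letI y : QuaternionGroup n := QuaternionGroup.xa (0 : ZMod (2 * n))
    letI S : Set (QuaternionGroup n) :=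
      {x ^ n} ∪
      {g | ∃ i : ℕ, 1 ≤ i ∧ i ≤ t / 2 - 1 ∧ (g = x ^ i ∨ g = (x ^ i)⁻¹)} ∪
      {g | ∃ i : ℕ, i ≤ t / 2 - 1 ∧ (g = x ^ i * y ∨ g = x ^ (n + i) * y)}
    IsPerfectCode (cayley (QuaternionGroup n) S)
      ((Subgroup.zpowers (x ^ t)) : Set (QuaternionGroup n)) := by
  exact qpc_main n hn t ht htdvd hodd _ rfl
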